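/- arXiv:2102.04765 — 2 statements merged into one kernel-verified Lean document; each statement's English description precedes it below -/
import Mathlib

section
/- Let n ≡ 2 (mod 3) with n ≥ 8. Among all triples of positive integers (a,b,c) with a + b + c = n - 3, the minimum of 1/a + 1/b + 1/c equals 3/(n-5) + 6/(n-2), attained at a = (n-5)/3, b = c = (n-2)/3. -/
lemma secant_bound (k a : ℕ) (hk : 2 ≤ k) (ha : 0 < a) :
    1 / ((k:ℝ) - 1) - ((a:ℝ) - (k:ℝ) + 1) / ((k:ℝ) * ((k:ℝ) - 1)) ≤ 1 / (a : ℝ) := by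
  have hk1 : (1:ℝ) ≤ (k:ℝ) - 1 := by
    have : (2:ℝ) ≤ (k:ℝ) := by exact_mod_cast hk
    linarith
  have hkpos : (0:ℝ) < (k:ℝ) := by linarith
  have hapos : (0:ℝ) < (a:ℝ) := by exact_mod_cast ha
  have hprod : (0:ℝ) ≤ ((a:ℝ) - (k:ℝ)) * ((a:ℝ) - ((k:ℝ) - 1)) := by
    rcases le_or_gt a (k-1) with h | h
    · have h' : (a:ℝ) ≤ (k:ℝ) - 1 := by
        have : a + 1 ≤ k := by omega
        have : (a:ℝ) + 1 ≤ (k:ℝ) := by exact_mod_cast this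
        linarith
      nlinarith
    · have h' : (k:ℝ) ≤ (a:ℝ) := by
        have : k ≤ a := by omega
        exact_mod_cast this
      nlinarith
  rw [div_sub_div _ _ (by linarith) (by positivity), div_le_div_iff₀ (by positivity) hapos]
  nlinarith

theorem min_inv_sum_mod_two (n : ℕ) (hn : 8 ≤ n) (hmod : n % 3 = 2) :
    (∀ a b c : ℕ, 0 < a → 0 < b → 0 < c → a + b + c = n - 3 →
      3 / ((n : ℝ) - 5) + 6 / ((n : ℝ) - 2) ≤ 1 / (a : ℝ) + 1 / (b : ℝ) + 1 / (c : ℝ)) ∧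
    (n - 5) / 3 + (n - 2) / 3 + (n - 2) / 3 = n - 3 ∧
    1 / (((n - 5) / 3 : ℕ) : ℝ) + 1 / (((n - 2) / 3 : ℕ) : ℝ) + 1 / (((n - 2) / 3 : ℕ) : ℝ) =
      3 / ((n : ℝ) - 5) + 6 / ((n : ℝ) - 2) := by
  obtain ⟨k, hk, hk2⟩ : ∃ k, n = 3 * k + 2 ∧ 2 ≤ k := ⟨n / 3, by omega, by omega⟩
  have hkR : (n:ℝ) = 3 * (k:ℝ) + 2 := by exact_mod_cast congrArg (Nat.cast : ℕ → ℝ) hk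
  have hk1 : (1:ℝ) ≤ (k:ℝ) - 1 := by
    have : (2:ℝ) ≤ (k:ℝ) := by exact_mod_cast hk2
    linarith
  have hkpos : (0:ℝ) < (k:ℝ) := by linarith
  refine ⟨?_, by omega, ?_⟩
  · intro a b c ha hb hc habc
    have hsum : (a:ℝ) + (b:ℝ) + (c:ℝ) = 3 * (k:ℝ) - 1 := by
      have : a + b + c = 3 * k - 1 := by omega
      have h1 : a + b + c + 1 = 3 * k := by omega
      have : ((a:ℝ) + b + c) + 1 = 3 * (k:ℝ) := by exact_mod_cast h1
      linarith
    have Ha := secant_bound k a hk2 ha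
    have Hb := secant_bound k b hk2 hb
    have Hc := secant_bound k c hk2 hc
    have key : 1 / ((k:ℝ) - 1) + 2 / (k:ℝ) ≤ 1 / (a:ℝ) + 1 / (b:ℝ) + 1 / (c:ℝ) := by
      have h3 : 3 / ((k:ℝ) - 1) - (((a:ℝ)+(b:ℝ)+(c:ℝ)) - 3*(k:ℝ) + 3) / ((k:ℝ) * ((k:ℝ) - 1))
          ≤ 1 / (a:ℝ) + 1 / (b:ℝ) + 1 / (c:ℝ) := by
        have e : 3 / ((k:ℝ) - 1) - (((a:ℝ)+(b:ℝ)+(c:ℝ)) - 3*(k:ℝ) + 3) / ((k:ℝ) * ((k:ℝ) - 1))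
            = (1 / ((k:ℝ) - 1) - ((a:ℝ) - (k:ℝ) + 1) / ((k:ℝ) * ((k:ℝ) - 1)))
            + (1 / ((k:ℝ) - 1) - ((b:ℝ) - (k:ℝ) + 1) / ((k:ℝ) * ((k:ℝ) - 1)))
            + (1 / ((k:ℝ) - 1) - ((c:ℝ) - (k:ℝ) + 1) / ((k:ℝ) * ((k:ℝ) - 1))) := by
          field_simp
          ring
        rw [e]; linarith
      rw [hsum] at h3
      have e2 : 3 / ((k:ℝ) - 1) - (3 * (k:ℝ) - 1 - 3*(k:ℝ) + 3) / ((k:ℝ) * ((k:ℝ) - 1))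
          = 1 / ((k:ℝ) - 1) + 2 / (k:ℝ) := by
        field_simp
        ring
      linarith [e2 ▸ h3]
    have hne : (k:ℝ) - 1 ≠ 0 := by linarith
    have e3 : 3 / ((n : ℝ) - 5) + 6 / ((n : ℝ) - 2) = 1 / ((k:ℝ) - 1) + 2 / (k:ℝ) := by
      rw [hkR]
      rw [show 3*(k:ℝ)+2-5 = 3*((k:ℝ)-1) by ring, show 3*(k:ℝ)+2-2 = 3*(k:ℝ) by ring]
      field_simp
      ring
    linarith
  · have e5 : ((n - 5) / 3 : ℕ) = k - 1 := by omega
    have e2 : ((n - 2) / 3 : ℕ) = k := by omega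
    rw [e5, e2]
    have ek1 : ((k - 1 : ℕ) : ℝ) = (k:ℝ) - 1 := by
      have : 1 ≤ k := by omega
      push_cast [this]; ring
    have hne : (k:ℝ) - 1 ≠ 0 := by linarith
    rw [ek1, hkR]
    rw [show 3*(k:ℝ)+2-5 = 3*((k:ℝ)-1) by ring, show 3*(k:ℝ)+2-2 = 3*(k:ℝ) by ring]
    field_simp
    ring
end

section
/- The cost of the fractional tour x_{i,j,k} on the instance I³_{i,j,k} equals 3 + 2/(i+1) + 2/(j+1) + 2/(k+1). Consequently, the integrality ratio of I³_{i,j,k} is at least (4 + 2/(i+1) + 2/(j+1) + 2/(k+1)) / (3 + 2/(i+1) + 2/(j+1) + 2/(k+1)) = 1 + 1/(3 + 2(1/(i+1) + 1/(j+1) + 1/(k+1))). -/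
open scoped Classical

/-- Manhattan (1-norm) distance in `ℝ³`. -/
noncomputable def dist1 (p q : ℝ × ℝ × ℝ) : ℝ :=
  |p.1 - q.1| + |p.2.1 - q.2.1| + |p.2.2 - q.2.2|

/-- The vertices `X_s` of the instance `I³_{i,j,k}`. -/
noncomputable def ptX (i s : ℕ) : ℝ × ℝ × ℝ := (0, 0, (s : ℝ) / ((i : ℝ) + 1))

/-- The vertices `Y_s` of the instance `I³_{i,j,k}`. -/
noncomputable def ptY (i j s : ℕ) : ℝ × ℝ × ℝ :=
  (1 / ((i : ℝ) + 1) + 1 / ((j : ℝ) + 1), 0, (s : ℝ) / ((j : ℝ) + 1))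

/-- The vertices `Z_s` of the instance `I³_{i,j,k}`. -/
noncomputable def ptZ (i k s : ℕ) : ℝ × ℝ × ℝ :=
  (1 / ((i : ℝ) + 1), 1 / ((k : ℝ) + 1), (s : ℝ) / ((k : ℝ) + 1))

/-- The point set of the instance `I³_{i,j,k}`. -/
noncomputable def I3pts (i j k : ℕ) : Finset (ℝ × ℝ × ℝ) :=
  (Finset.range (i + 2)).image (ptX i) ∪ (Finset.range (j + 2)).image (ptY i j) ∪
    (Finset.range (k + 2)).image (ptZ i k)

/-- The length of the closed tour visiting the entries of `L` in cyclic order. -/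
def cycleLength {α : Type*} (d : α → α → ℝ) (L : List α) : ℝ :=
  ((L.zip (L.rotate 1)).map (fun p => d p.1 p.2)).sum

/-- The cost of the fractional tour `x_{i,j,k}` on the instance `I³_{i,j,k}`:
weight 1 on consecutive edges of the three lines, weight 1/2 on the six triangle edges. -/
noncomputable def I3fracCost (i j k : ℕ) : ℝ :=
  (∑ s ∈ Finset.range (i + 1), dist1 (ptX i s) (ptX i (s + 1))) +
  (∑ s ∈ Finset.range (j + 1), dist1 (ptY i j s) (ptY i j (s + 1))) +
  (∑ s ∈ Finset.range (k + 1), dist1 (ptZ i k s) (ptZ i k (s + 1))) +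
  (1 / 2) * (dist1 (ptX i 0) (ptY i j 0) + dist1 (ptX i 0) (ptZ i k 0) +
    dist1 (ptY i j 0) (ptZ i k 0) + dist1 (ptX i (i + 1)) (ptY i j (j + 1)) +
    dist1 (ptX i (i + 1)) (ptZ i k (k + 1)) + dist1 (ptY i j (j + 1)) (ptZ i k (k + 1)))

namespace I3proof

open Finset

variable {n : ℕ} [NeZero n]

/-- Generic cyclic parity: number of down-flips equals number of up-flips. -/
lemma card_flip_eq (P : ZMod n → Prop) [DecidablePred P] :
    (univ.filter fun t => P t ∧ ¬ P (t+1)).card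
      = (univ.filter fun t => ¬ P t ∧ P (t+1)).card := by
  have h0 : (∑ t : ZMod n, ((if P (t+1) then (1:ℤ) else 0) - (if P t then 1 else 0))) = 0 := by
    rw [Finset.sum_sub_distrib]
    have hs : (∑ t : ZMod n, (if P (t+1) then (1:ℤ) else 0)) = ∑ t : ZMod n, (if P t then (1:ℤ) else 0) :=
      Fintype.sum_equiv (Equiv.addRight (1 : ZMod n)) _ _ (fun t => rfl)
    rw [hs]; ring
  have h1 : ∀ t : ZMod n, ((if P (t+1) then (1:ℤ) else 0) - (if P t then 1 else 0))
      = (if (¬ P t ∧ P (t+1)) then (1:ℤ) else 0) - (if (P t ∧ ¬ P (t+1)) then 1 else 0) := by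
    intro t; by_cases h : P t <;> by_cases h' : P (t+1) <;> simp [h, h']
  rw [Finset.sum_congr rfl (fun t _ => h1 t), Finset.sum_sub_distrib,
    Finset.sum_boole, Finset.sum_boole] at h0
  have := sub_eq_zero.mp h0
  exact_mod_cast this.symm

/-- Cardinality is invariant under shifting the cyclic index. -/
lemma card_shift (Q : ZMod n → Prop) :
    (univ.filter fun t => Q (t+1)).card = (univ.filter Q).card := by
  apply Finset.card_bij (fun t _ => t + 1)
  · intro a ha; simp only [mem_filter, mem_univ, true_and] at ha ⊢; exact ha
  · intro a _ b _ h; exact by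
      have := congrArg (fun x => x - 1) h; simpa using this
  · intro b hb; refine ⟨b - 1, ?_, by ring⟩
    simp only [mem_filter, mem_univ, true_and] at hb ⊢
    simpa using hb

section Core

variable (f : ZMod n → Fin 3 × ℝ)

noncomputable def G : Finset ℝ := Finset.image (fun t => (f t).2) Finset.univ

noncomputable def nxt (v : ℝ) : ℝ :=
  if h : ((G f).filter (fun w => v < w)).Nonempty then ((G f).filter (fun w => v < w)).min' h
  else v + 1

noncomputable def Gaps : Finset ℝ := (G f).filter (fun v => v < 1)

noncomputable def len (v : ℝ) : ℝ := nxt f v - v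

variable {f}

lemma zeta_mem_G (t : ZMod n) : (f t).2 ∈ G f := by
  exact Finset.mem_image.mpr ⟨t, Finset.mem_univ t, rfl⟩

lemma nxt_spec (h1 : (1:ℝ) ∈ G f) {v : ℝ} (hv1 : v < 1) :
    v < nxt f v ∧ nxt f v ∈ G f ∧ ∀ w ∈ G f, v < w → nxt f v ≤ w := by
  have hne : ((G f).filter (fun w => v < w)).Nonempty := ⟨1, Finset.mem_filter.mpr ⟨h1, hv1⟩⟩
  rw [nxt, dif_pos hne]
  have hmem := Finset.min'_mem _ hne
  rw [Finset.mem_filter] at hmem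
  exact ⟨hmem.2, hmem.1, fun w hw hvw => Finset.min'_le _ _ (Finset.mem_filter.mpr ⟨hw, hvw⟩)⟩

/-- Telescoping: a difference of two values of `G` is the total length of gaps between them. -/
lemma tele (h1 : (1:ℝ) ∈ G f) (hGle : ∀ v ∈ G f, v ≤ 1) :
    ∀ m : ℕ, ∀ z z' : ℝ, z ∈ G f → z' ∈ G f → z ≤ z' →
    ((Gaps f).filter (fun v => z ≤ v ∧ v < z')).card ≤ m →
    z' - z = ∑ v ∈ (Gaps f).filter (fun v => z ≤ v ∧ v < z'), len f v := by
  intro m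
  induction m with
  | zero =>
    intro z z' hz hz' hle hcard
    rcases eq_or_lt_of_le hle with h | h
    · subst h
      have : (Gaps f).filter (fun v => z ≤ v ∧ v < z) = ∅ := by
        apply Finset.filter_false_of_mem; intro v _ ⟨h1', h2'⟩; exact absurd (lt_of_le_of_lt h1' h2') (lt_irrefl z)
      rw [this]; simp
    · exfalso
      have hzR : z ∈ (Gaps f).filter (fun v => z ≤ v ∧ v < z') := by
        refine Finset.mem_filter.mpr ⟨Finset.mem_filter.mpr ⟨hz, lt_of_lt_of_le h (hGle _ hz')⟩, le_refl z, h⟩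
      have := Finset.card_pos.mpr ⟨z, hzR⟩
      omega
  | succ m ih =>
    intro z z' hz hz' hle hcard
    rcases eq_or_lt_of_le hle with h | h
    · subst h
      have : (Gaps f).filter (fun v => z ≤ v ∧ v < z) = ∅ := by
        apply Finset.filter_false_of_mem; intro v _ ⟨h1', h2'⟩; exact absurd (lt_of_le_of_lt h1' h2') (lt_irrefl z)
      rw [this]; simp
    · have hz1 : z < 1 := lt_of_lt_of_le h (hGle _ hz')
      obtain ⟨hlt, hmem, hmin⟩ := nxt_spec h1 hz1
      have hw' : nxt f z ≤ z' := hmin _ hz' h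
      have hsplit : (Gaps f).filter (fun v => z ≤ v ∧ v < z')
          = insert z ((Gaps f).filter (fun v => nxt f z ≤ v ∧ v < z')) := by
        ext v
        simp only [Finset.mem_insert, Finset.mem_filter, Gaps, Finset.mem_filter]
        constructor
        · rintro ⟨⟨hvG, hv1⟩, hzv, hvz'⟩
          rcases eq_or_lt_of_le hzv with h' | h'
          · exact Or.inl h'.symm
          · exact Or.inr ⟨⟨hvG, hv1⟩, hmin _ hvG h', hvz'⟩
        · rintro (rfl | ⟨⟨hvG, hv1⟩, hnv, hvz'⟩)
          · exact ⟨⟨hz, hz1⟩, le_refl _, h⟩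
          · exact ⟨⟨hvG, hv1⟩, le_trans (le_of_lt hlt) hnv, hvz'⟩
      have hznot : z ∉ (Gaps f).filter (fun v => nxt f z ≤ v ∧ v < z') := by
        simp only [Finset.mem_filter]
        rintro ⟨-, hc, -⟩; exact absurd (lt_of_lt_of_le hlt hc) (lt_irrefl z)
      have hcard' : ((Gaps f).filter (fun v => nxt f z ≤ v ∧ v < z')).card ≤ m := by
        have := hcard
        rw [hsplit, Finset.card_insert_of_notMem hznot] at this
        omega
      have hrec := ih (nxt f z) z' hmem hz' hw' hcard'
      rw [hsplit, Finset.sum_insert hznot, ← hrec, len]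
      ring

lemma tele' (h1 : (1:ℝ) ∈ G f) (hGle : ∀ v ∈ G f, v ≤ 1) {z z' : ℝ}
    (hz : z ∈ G f) (hz' : z' ∈ G f) (hle : z ≤ z') :
    z' - z = ∑ v ∈ (Gaps f).filter (fun v => z ≤ v ∧ v < z'), len f v :=
  tele h1 hGle _ z z' hz hz' hle le_rfl

end Core

section Core2

variable (f : ZMod n → Fin 3 × ℝ)


variable (f : ZMod n → Fin 3 × ℝ)


/-- The set of cyclic positions straddling the gap just above `v`. -/
noncomputable def Str (v : ℝ) : Finset (ZMod n) :=
  univ.filter (fun t => ((f t).2 ≤ v ∧ ¬ (f (t+1)).2 ≤ v) ∨ ((f (t+1)).2 ≤ v ∧ ¬ (f t).2 ≤ v))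

/-- Line `ℓ` has a monochromatic cyclic path spanning from below `lo` to above `hi`. -/
def spans (ℓ : Fin 3) (lo hi : ℝ) : Prop :=
  ∃ (t : ZMod n) (K k1 k2 : ℕ), k1 ≤ K ∧ k2 ≤ K ∧ (∀ k : ℕ, k ≤ K → (f (t + (k : ℕ))).1 = ℓ) ∧
    (f (t + (k1 : ℕ))).2 ≤ lo ∧ hi ≤ (f (t + (k2 : ℕ))).2

noncomputable def Exits (ℓ : Fin 3) : Finset (ZMod n) :=
  univ.filter (fun t => (f t).1 = ℓ ∧ (f (t+1)).1 ≠ ℓ)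

variable {f}

/-- `Str v` has even cardinality. -/
lemma str_even (v : ℝ) : ∃ m : ℕ, (Str f v).card = 2 * m := by
  classical
  set U := univ.filter (fun t : ZMod n => (f t).2 ≤ v ∧ ¬ (f (t+1)).2 ≤ v) with hU
  set D := univ.filter (fun t : ZMod n => ¬ (f t).2 ≤ v ∧ (f (t+1)).2 ≤ v) with hD
  have hUD : (Str f v) = U ∪ D := by
    ext t; simp only [Str, hU, hD, Finset.mem_union, Finset.mem_filter, Finset.mem_univ, true_and]
    tauto
  have hdisj : Disjoint U D := by
    rw [Finset.disjoint_left]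
    intro t htU htD
    simp only [hU, hD, Finset.mem_filter, Finset.mem_univ, true_and] at htU htD
    tauto
  have hcard : (Str f v).card = U.card + D.card := by rw [hUD, Finset.card_union_of_disjoint hdisj]
  have heq : U.card = D.card := card_flip_eq (fun t => (f t).2 ≤ v)
  exact ⟨U.card, by omega⟩

/-- If all steps preserve a property, it is constant along the path. -/
lemma const_of_no_flip (b : ℕ → Prop) (K : ℕ) (h : ∀ k, k < K → (b k ↔ b (k+1))) :
    ∀ k, k ≤ K → (b k ↔ b 0) := by
  intro k
  induction k with
  | zero => intro _; rfl
  | succ m ih =>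
    intro hm
    have h1 := h m (by omega)
    have h2 := ih (by omega)
    rw [← h1]; exact h2

/-- A spanning monochromatic path yields a monochromatic straddling edge. -/
lemma spans_to_straddle (h1 : (1:ℝ) ∈ G f) {v : ℝ} (hv1 : v < 1) {ℓ : Fin 3}
    (hsp : spans f ℓ v (nxt f v)) :
    ∃ u ∈ Str f v, (f u).1 = ℓ := by
  obtain ⟨t, K, k1, k2, hk1, hk2, hmono, hlo, hhi⟩ := hsp
  have hnxt : v < nxt f v := (nxt_spec h1 hv1).1
  have hk2v : ¬ (f (t + (k2:ℕ))).2 ≤ v := fun hc => absurd (le_trans hhi hc) (not_le.mpr hnxt)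
  set b : ℕ → Prop := fun k => (f (t + (k:ℕ))).2 ≤ v with hb
  have hflip : ∃ k, k < K ∧ ¬ (b k ↔ b (k+1)) := by
    by_contra hc
    push_neg at hc
    have hconst := const_of_no_flip b K hc
    have e1 := hconst k1 hk1
    have e2 := hconst k2 hk2
    rw [hb] at e1 e2
    tauto
  obtain ⟨k, hkK, hkflip⟩ := hflip
  refine ⟨t + (k : ℕ), ?_, hmono k (le_of_lt hkK)⟩
  have hsucc : (t + (k:ℕ)) + 1 = t + ((k+1 : ℕ) : ZMod n) := by push_cast; ring
  simp only [Str, Finset.mem_filter, Finset.mem_univ, true_and, hsucc]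
  rw [hb] at hkflip
  push_cast at hkflip ⊢
  tauto

/-- Key per-gap inequality: `2·(number of lines spanning the gap) ≤ crossings + 2`. -/
lemma gap_ineq (h1 : (1:ℝ) ∈ G f) {v : ℝ} (hv1 : v < 1) :
    2 * (univ.filter (fun ℓ : Fin 3 => spans f ℓ v (nxt f v))).card ≤ (Str f v).card + 2 := by
  classical
  set C := univ.filter (fun ℓ : Fin 3 => spans f ℓ v (nxt f v)) with hC
  have hwit : ∀ ℓ ∈ C, ∃ u, u ∈ Str f v ∧ (f u).1 = ℓ := by
    intro ℓ hℓ
    rw [hC, Finset.mem_filter] at hℓ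
    obtain ⟨u, hu, hu2⟩ := spans_to_straddle h1 hv1 hℓ.2
    exact ⟨u, hu, hu2⟩
  have hinj : C.card ≤ (Str f v).card := by
    have : ∀ ℓ : Fin 3, ∃ u : ZMod n, ℓ ∈ C → (u ∈ Str f v ∧ (f u).1 = ℓ) := by
      intro ℓ
      rcases Classical.em (ℓ ∈ C) with h | h
      · obtain ⟨u, hu⟩ := hwit ℓ h; exact ⟨u, fun _ => hu⟩
      · exact ⟨0, fun hc => absurd hc h⟩
    choose w hw using this
    apply Finset.card_le_card_of_injOn w (fun ℓ hℓ => (hw ℓ hℓ).1)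
    intro ℓ hℓ ℓ' hℓ' heq
    have e1 := (hw ℓ (by simpa using hℓ)).2
    have e2 := (hw ℓ' (by simpa using hℓ')).2
    rw [heq] at e1; rw [e1] at e2; exact e2
  have hC3 : C.card ≤ 3 := by
    have := Finset.card_filter_le (univ : Finset (Fin 3)) (fun ℓ => spans f ℓ v (nxt f v))
    simpa using this
  obtain ⟨m, hm⟩ := str_even (f := f) v
  omega

end Core2

section Cov

variable {f : ZMod n → Fin 3 × ℝ} {α : Fin 3 → ℝ} {N : Fin 3 → ℕ}

lemma spans_mono {ℓ : Fin 3} {lo hi lo' hi' : ℝ} (h : spans f ℓ lo hi)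
    (h1 : lo ≤ lo') (h2 : hi' ≤ hi) : spans f ℓ lo' hi' := by
  obtain ⟨t, K, k1, k2, a1, a2, a3, a4, a5⟩ := h
  exact ⟨t, K, k1, k2, a1, a2, a3, le_trans a4 h1, le_trans h2 a5⟩

/-- The coverage lemma: gaps spanned by line `ℓ` have total length at least
`1 + α ℓ - (number of exits of ℓ) * α ℓ`. -/
lemma coverage
    (hα : ∀ ℓ, 0 < α ℓ)
    (hNα : ∀ ℓ, (N ℓ : ℝ) * α ℓ = 1)
    (hsurj : ∀ ℓ : Fin 3, ∀ s : ℕ, s ≤ N ℓ → ∃ t, f t = (ℓ, (s : ℝ) * α ℓ))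
    (hother : ∀ t : ZMod n, ∃ u : ZMod n, (f u).1 ≠ (f t).1)
    (h1G : (1:ℝ) ∈ G f) (hGle : ∀ v ∈ G f, v ≤ 1)
    (ℓ : Fin 3) :
    1 + α ℓ - (Exits f ℓ).card * α ℓ
      ≤ ∑ v ∈ (Gaps f).filter (fun v => spans f ℓ v (nxt f v)), len f v := by
  classical
  -- exit machinery
  have hex : ∀ t : ZMod n, ∃ k : ℕ, (f (t + (k : ℕ) + 1)).1 ≠ (f t).1 := by
    intro t
    obtain ⟨u, hu⟩ := hother t
    refine ⟨(u - t - 1).val, ?_⟩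
    have hvv : (((u - t - 1).val : ℕ) : ZMod n) = u - t - 1 := ZMod.natCast_rightInverse _
    have : t + (((u - t - 1).val : ℕ) : ZMod n) + 1 = u := by rw [hvv]; ring
    rw [this]; exact hu
  set Kt : ZMod n → ℕ := fun t => Nat.find (hex t) with hKt
  set ex : ZMod n → ZMod n := fun t => t + (Kt t : ℕ) with hexdef
  have hmono : ∀ t : ZMod n, ∀ k : ℕ, k ≤ Kt t → (f (t + (k : ℕ))).1 = (f t).1 := by
    intro t k hk
    cases k with
    | zero => simp
    | succ m =>
      have hm : m < Kt t := by omega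
      have := Nat.find_min (hex t) hm
      push_neg at this
      have hc : t + ((m+1 : ℕ) : ZMod n) = t + (m : ℕ) + 1 := by push_cast; ring
      rw [hc]; exact this
  have hexmem : ∀ t : ZMod n, ex t ∈ Exits f ((f t).1) := by
    intro t
    have h1 := hmono t (Kt t) le_rfl
    have h2 := Nat.find_spec (hex t)
    simp only [Exits, Finset.mem_filter, Finset.mem_univ, true_and, hexdef]
    exact ⟨h1, h2⟩
  -- two indices with the same exit lie on a common monochromatic path
  have hsame : ∀ t u : ZMod n, (f t).1 = ℓ → (f u).1 = ℓ → ex t = ex u →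
      ∀ lo hi : ℝ, (f t).2 ≤ lo → hi ≤ (f u).2 → spans f ℓ lo hi := by
    have key : ∀ t u : ZMod n, (f t).1 = ℓ → (f u).1 = ℓ → ex t = ex u → Kt u ≤ Kt t →
        ∀ lo hi : ℝ, (f t).2 ≤ lo → hi ≤ (f u).2 → spans f ℓ lo hi := by
      intro t u ht hu hexeq hKle lo hi hlo hhi
      have hu' : u = t + ((Kt t - Kt u : ℕ) : ZMod n) := by
        have heq' : t + ((Kt t : ℕ) : ZMod n) = u + ((Kt u : ℕ) : ZMod n) := hexeq
        have hcast : ((Kt t - Kt u : ℕ) : ZMod n) = ((Kt t : ℕ) : ZMod n) - ((Kt u : ℕ) : ZMod n) := by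
          push_cast [Nat.cast_sub hKle]; ring
        have h2 := eq_sub_of_add_eq heq'.symm
        rw [hcast] at *
        exact h2.trans (by ring)
      refine ⟨t, Kt t, 0, Kt t - Kt u, by omega, by omega, ?_, ?_, ?_⟩
      · intro k hk; rw [hmono t k hk]; exact ht
      · simpa using hlo
      · rw [← hu']; exact hhi
    intro t u ht hu hexeq lo hi hlo hhi
    rcases le_total (Kt u) (Kt t) with h | h
    · exact key t u ht hu hexeq h lo hi hlo hhi
    · -- symmetric: span from u's path, positions swapped
      have hu' : t = u + ((Kt u - Kt t : ℕ) : ZMod n) := by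
        have heq2 : u + ((Kt u : ℕ) : ZMod n) = t + ((Kt t : ℕ) : ZMod n) := hexeq.symm
        have hcast : ((Kt u - Kt t : ℕ) : ZMod n) = ((Kt u : ℕ) : ZMod n) - ((Kt t : ℕ) : ZMod n) := by
          push_cast [Nat.cast_sub h]; ring
        have h2 := eq_sub_of_add_eq heq2.symm
        rw [hcast] at *
        exact h2.trans (by ring)
      refine ⟨u, Kt u, Kt u - Kt t, 0, by omega, by omega, ?_, ?_, ?_⟩
      · intro k hk; rw [hmono u k hk]; exact hu
      · rw [← hu']; exact hlo
      · simpa using hhi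
  -- grid values
  set g : ℕ → ℝ := fun s => (s : ℝ) * α ℓ with hg
  have hgmono : ∀ s s' : ℕ, s ≤ s' → g s ≤ g s' := by
    intro s s' hss'
    exact mul_le_mul_of_nonneg_right (by exact_mod_cast hss') (le_of_lt (hα ℓ))
  have hgmono' : ∀ s s' : ℕ, s < s' → g s < g s' := by
    intro s s' hss'
    exact mul_lt_mul_of_pos_right (by exact_mod_cast hss') (hα ℓ)
  have hgN : g (N ℓ) = 1 := hNα ℓ
  have hT : ∀ s : ℕ, ∃ t : ZMod n, s ≤ N ℓ → f t = (ℓ, g s) := by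
    intro s
    rcases Classical.em (s ≤ N ℓ) with h | h
    · obtain ⟨t, ht⟩ := hsurj ℓ s h; exact ⟨t, fun _ => ht⟩
    · exact ⟨0, fun hc => absurd hc h⟩
  choose T hTspec using hT
  have hTline : ∀ s : ℕ, s ≤ N ℓ → (f (T s)).1 = ℓ := fun s hs => by rw [hTspec s hs]
  have hTz : ∀ s : ℕ, s ≤ N ℓ → (f (T s)).2 = g s := fun s hs => by rw [hTspec s hs]
  have hgG : ∀ s : ℕ, s ≤ N ℓ → g s ∈ G f := by
    intro s hs
    refine Finset.mem_image.mpr ⟨T s, Finset.mem_univ _, ?_⟩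
    rw [hTspec s hs]
  set Goods := (Finset.range (N ℓ)).filter (fun s => spans f ℓ (g s) (g (s+1))) with hGoods
  set Bads := (Finset.range (N ℓ)).filter (fun s => ¬ spans f ℓ (g s) (g (s+1))) with hBads
  -- bad gaps: everything sharing the exit of T s stays strictly below g (s+1)
  have hbound : ∀ s : ℕ, s ∈ Bads → ∀ u : ZMod n, (f u).1 = ℓ → ex u = ex (T s) →
      (f u).2 < g (s+1) := by
    intro s hs u hu hexeq
    rw [hBads, Finset.mem_filter, Finset.mem_range] at hs
    by_contra hc
    push_neg at hc
    have hsle : s ≤ N ℓ := le_of_lt hs.1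
    apply hs.2
    exact hsame (T s) u (hTline s hsle) hu hexeq.symm (g s) (g (s+1)) (le_of_eq (hTz s hsle)) hc
  set etop := ex (T (N ℓ)) with hetop
  have hetopE : etop ∈ Exits f ℓ := by
    have := hexmem (T (N ℓ))
    rwa [hTline (N ℓ) le_rfl] at this
  have hinj : Bads.card ≤ ((Exits f ℓ).erase etop).card := by
    apply Finset.card_le_card_of_injOn (fun s => ex (T s))
    · intro s hs
      have hsB := hs
      rw [hBads, Finset.mem_coe, Finset.mem_filter, Finset.mem_range] at hsB
      refine Finset.mem_erase.mpr ⟨?_, ?_⟩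
      · intro hc
        have hc' : ex (T (N ℓ)) = ex (T s) := by
          rw [hetop] at hc; exact hc.symm
        have hb := hbound s hs (T (N ℓ)) (hTline (N ℓ) le_rfl) hc'
        rw [hTz (N ℓ) le_rfl, hgN] at hb
        have hle1 : g (s+1) ≤ 1 := by
          rw [← hgN]; exact hgmono _ _ (by omega)
        linarith
      · have := hexmem (T s)
        rwa [hTline s (le_of_lt hsB.1)] at this
    · intro s hs s' hs' heq
      simp only [Finset.mem_coe] at hs hs'
      by_contra hne
      have hsB := hs
      have hs'B := hs'
      rw [hBads, Finset.mem_filter, Finset.mem_range] at hsB hs'B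
      simp only at heq
      rcases lt_or_gt_of_ne hne with h | h
      · have hb := hbound s hs (T s') (hTline s' (le_of_lt hs'B.1)) heq.symm
        rw [hTz s' (le_of_lt hs'B.1)] at hb
        have : g (s+1) ≤ g s' := hgmono _ _ (by omega)
        linarith
      · have hb := hbound s' hs' (T s) (hTline s (le_of_lt hsB.1)) heq
        rw [hTz s (le_of_lt hsB.1)] at hb
        have : g (s'+1) ≤ g s := hgmono _ _ (by omega)
        linarith
  -- sum over good gaps
  have hAdisj : ∀ s ∈ Goods, ∀ s' ∈ Goods, s ≠ s' →
      Disjoint ((Gaps f).filter (fun v => g s ≤ v ∧ v < g (s+1)))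
        ((Gaps f).filter (fun v => g s' ≤ v ∧ v < g (s'+1))) := by
    intro s _ s' _ hne
    rw [Finset.disjoint_left]
    intro v hv hv'
    rw [Finset.mem_filter] at hv hv'
    rcases lt_or_gt_of_ne hne with h | h
    · have : g (s+1) ≤ g s' := hgmono _ _ (by omega)
      linarith [hv.2.2, hv'.2.1]
    · have : g (s'+1) ≤ g s := hgmono _ _ (by omega)
      linarith [hv'.2.2, hv.2.1]
  have hsub : Goods.biUnion (fun s => (Gaps f).filter (fun v => g s ≤ v ∧ v < g (s+1)))
      ⊆ (Gaps f).filter (fun v => spans f ℓ v (nxt f v)) := by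
    intro v hv
    rw [Finset.mem_biUnion] at hv
    obtain ⟨s, hsG, hvA⟩ := hv
    rw [Finset.mem_filter] at hvA
    rw [hGoods, Finset.mem_filter, Finset.mem_range] at hsG
    refine Finset.mem_filter.mpr ⟨hvA.1, ?_⟩
    have hv1 : v < 1 := by
      rw [Gaps, Finset.mem_filter] at hvA
      exact hvA.1.2
    have hnle : nxt f v ≤ g (s+1) := by
      exact (nxt_spec h1G hv1).2.2 _ (hgG (s+1) (by omega)) hvA.2.2
    exact spans_mono hsG.2 hvA.2.1 hnle
  have hlen_nonneg : ∀ v ∈ Gaps f, 0 ≤ len f v := by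
    intro v hv
    rw [Gaps, Finset.mem_filter] at hv
    have := (nxt_spec h1G hv.2).1
    rw [len]; linarith
  have hsum1 : ∑ v ∈ Goods.biUnion (fun s => (Gaps f).filter (fun v => g s ≤ v ∧ v < g (s+1))), len f v
      ≤ ∑ v ∈ (Gaps f).filter (fun v => spans f ℓ v (nxt f v)), len f v := by
    apply Finset.sum_le_sum_of_subset_of_nonneg hsub
    intro v hv _
    exact hlen_nonneg v (Finset.mem_filter.mp hv).1
  have hsum2 : ∑ v ∈ Goods.biUnion (fun s => (Gaps f).filter (fun v => g s ≤ v ∧ v < g (s+1))), len f v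
      = ∑ s ∈ Goods, (α ℓ) := by
    rw [Finset.sum_biUnion hAdisj]
    apply Finset.sum_congr rfl
    intro s hsG
    rw [hGoods, Finset.mem_filter, Finset.mem_range] at hsG
    have := tele' h1G hGle (hgG s (by omega)) (hgG (s+1) (by omega)) (hgmono s (s+1) (by omega))
    rw [← this, hg]
    push_cast; ring
  have hcards : Goods.card + Bads.card = N ℓ := by
    rw [hGoods, hBads]
    rw [Finset.card_filter_add_card_filter_not]
    · exact Finset.card_range _
  have hE1 : 1 ≤ (Exits f ℓ).card := Finset.card_pos.mpr ⟨etop, hetopE⟩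
  have herase : ((Exits f ℓ).erase etop).card = (Exits f ℓ).card - 1 :=
    Finset.card_erase_of_mem hetopE
  have hGoodsℝ : ((N ℓ : ℝ) + 1 - (Exits f ℓ).card) ≤ Goods.card := by
    have h1 : Bads.card ≤ (Exits f ℓ).card - 1 := by rw [← herase]; exact hinj
    have : N ℓ + 1 ≤ Goods.card + (Exits f ℓ).card := by omega
    have := (Nat.cast_le (α := ℝ)).mpr this
    push_cast at this
    linarith
  calc 1 + α ℓ - (Exits f ℓ).card * α ℓ
      = ((N ℓ : ℝ) + 1 - (Exits f ℓ).card) * α ℓ := by linear_combination (-1 : ℝ) * hNα ℓ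
    _ ≤ (Goods.card : ℝ) * α ℓ := mul_le_mul_of_nonneg_right hGoodsℝ (le_of_lt (hα ℓ))
    _ = ∑ s ∈ Goods, (α ℓ) := by rw [Finset.sum_const, nsmul_eq_mul]
    _ ≤ _ := by rw [← hsum2]; exact hsum1

end Cov

section Main

variable {f : ZMod n → Fin 3 × ℝ} {α : Fin 3 → ℝ} {N : Fin 3 → ℕ}

lemma edge_decomp (h1G : (1:ℝ) ∈ G f) (hGle : ∀ v ∈ G f, v ≤ 1) (t : ZMod n) :
    |(f (t+1)).2 - (f t).2| = ∑ v ∈ Gaps f, len f v * (if t ∈ Str f v then 1 else 0) := by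
  classical
  set z := min (f t).2 (f (t+1)).2 with hz
  set z' := max (f t).2 (f (t+1)).2 with hz'
  have hzG : z ∈ G f := by
    rcases min_cases (f t).2 (f (t+1)).2 with ⟨h, -⟩ | ⟨h, -⟩ <;> rw [hz, h] <;> exact zeta_mem_G _
  have hz'G : z' ∈ G f := by
    rcases max_cases (f t).2 (f (t+1)).2 with ⟨h, -⟩ | ⟨h, -⟩ <;> rw [hz', h] <;> exact zeta_mem_G _
  have habs : |(f (t+1)).2 - (f t).2| = z' - z := by
    rw [hz, hz']; exact (max_sub_min_eq_abs ((f t).2) ((f (t+1)).2)).symm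
  rw [habs, tele' h1G hGle hzG hz'G (le_trans (min_le_left _ _) (le_max_left _ _))]
  rw [Finset.sum_filter]
  apply Finset.sum_congr rfl
  intro v hv
  have hvG : v ∈ G f := (Finset.mem_filter.mp hv).1
  have hv1 : v < 1 := (Finset.mem_filter.mp hv).2
  have hiff : (z ≤ v ∧ v < z') ↔ t ∈ Str f v := by
    constructor
    · rintro ⟨h1, h2⟩
      simp only [Str, Finset.mem_filter, Finset.mem_univ, true_and]
      rcases le_total (f t).2 (f (t+1)).2 with h | h
      · left
        rw [hz, min_eq_left h] at h1
        rw [hz', max_eq_right h] at h2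
        exact ⟨h1, not_le.mpr h2⟩
      · right
        rw [hz, min_eq_right h] at h1
        rw [hz', max_eq_left h] at h2
        exact ⟨h1, not_le.mpr h2⟩
    · intro hstr
      simp only [Str, Finset.mem_filter, Finset.mem_univ, true_and] at hstr
      rcases hstr with ⟨h1, h2⟩ | ⟨h1, h2⟩
      · exact ⟨le_trans (min_le_left _ _) h1, lt_of_lt_of_le (not_le.mp h2) (le_max_right _ _)⟩
      · exact ⟨le_trans (min_le_right _ _) h1, lt_of_lt_of_le (not_le.mp h2) (le_max_left _ _)⟩
  by_cases hmem : t ∈ Str f v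
  · rw [if_pos (hiff.mpr hmem), if_pos hmem, mul_one]
  · rw [if_neg (fun hc => hmem (hiff.mp hc)), if_neg hmem, mul_zero]

lemma sumZ (h1G : (1:ℝ) ∈ G f) (hGle : ∀ v ∈ G f, v ≤ 1) :
    ∑ t : ZMod n, |(f (t+1)).2 - (f t).2|
      = ∑ v ∈ Gaps f, len f v * ((Str f v).card : ℝ) := by
  rw [Finset.sum_congr rfl (fun t _ => edge_decomp h1G hGle t)]
  rw [Finset.sum_comm]
  apply Finset.sum_congr rfl
  intro v _
  rw [← Finset.mul_sum]
  congr 1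
  have hfe : univ.filter (fun t : ZMod n => t ∈ Str f v) = Str f v := by
    ext u; simp
  rw [Finset.sum_boole, hfe]

lemma single_line_sum (t : ZMod n) (c : Fin 3 → ℝ) (Q : Prop) [Decidable Q] :
    (if Q then c (f t).1 else 0)
      = ∑ ℓ : Fin 3, (if ((f t).1 = ℓ ∧ Q) then c ℓ else 0) := by
  rw [Finset.sum_eq_single ((f t).1)]
  · by_cases h : Q <;> simp [h]
  · intro ℓ _ hne
    rw [if_neg]; rintro ⟨h1, -⟩; exact hne h1.symm
  · intro h; exact absurd (Finset.mem_univ _) h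

lemma bridge_sum :
    ∑ t : ZMod n, (if (f t).1 = (f (t+1)).1 then 0 else α (f t).1 + α (f (t+1)).1)
      = 2 * ∑ ℓ : Fin 3, α ℓ * ((Exits f ℓ).card : ℝ) := by
  classical
  have hsplit : ∀ t : ZMod n, (if (f t).1 = (f (t+1)).1 then 0 else α (f t).1 + α (f (t+1)).1)
      = (if (f t).1 = (f (t+1)).1 then 0 else α (f t).1)
        + (if (f t).1 = (f (t+1)).1 then 0 else α (f (t+1)).1) := by
    intro t; by_cases h : (f t).1 = (f (t+1)).1 <;> simp [h]
  rw [Finset.sum_congr rfl (fun t _ => hsplit t), Finset.sum_add_distrib]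
  have hA : ∑ t : ZMod n, (if (f t).1 = (f (t+1)).1 then 0 else α (f t).1)
      = ∑ ℓ : Fin 3, α ℓ * ((Exits f ℓ).card : ℝ) := by
    have h1 : ∀ t : ZMod n, (if (f t).1 = (f (t+1)).1 then 0 else α (f t).1)
        = ∑ ℓ : Fin 3, (if ((f t).1 = ℓ ∧ (f (t+1)).1 ≠ ℓ) then α ℓ else 0) := by
      intro t
      have h2 : (if (f t).1 = (f (t+1)).1 then 0 else α (f t).1)
          = (if (f (t+1)).1 ≠ (f t).1 then α (f t).1 else 0) := by
        by_cases h : (f t).1 = (f (t+1)).1 <;> simp [h, Ne, eq_comm]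
      rw [h2, single_line_sum t α ((f (t+1)).1 ≠ (f t).1)]
      apply Finset.sum_congr rfl
      intro ℓ _
      by_cases hL : (f t).1 = ℓ
      · subst hL; rfl
      · simp [hL]
    rw [Finset.sum_congr rfl (fun t _ => h1 t), Finset.sum_comm]
    apply Finset.sum_congr rfl
    intro ℓ _
    rw [← Finset.sum_filter, Finset.sum_const, nsmul_eq_mul, mul_comm]
    rfl
  have hB : ∑ t : ZMod n, (if (f t).1 = (f (t+1)).1 then 0 else α (f (t+1)).1)
      = ∑ ℓ : Fin 3, α ℓ * ((Exits f ℓ).card : ℝ) := by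
    have hshift : ∑ t : ZMod n, (if (f t).1 = (f (t+1)).1 then 0 else α (f (t+1)).1)
        = ∑ u : ZMod n, (if (f (u-1)).1 = (f u).1 then 0 else α (f u).1) := by
      apply Fintype.sum_equiv (Equiv.addRight (1 : ZMod n))
      intro t
      simp only [Equiv.coe_addRight, add_sub_cancel_right]
    rw [hshift]
    have h1 : ∀ u : ZMod n, (if (f (u-1)).1 = (f u).1 then 0 else α (f u).1)
        = ∑ ℓ : Fin 3, (if ((f u).1 = ℓ ∧ (f (u-1)).1 ≠ ℓ) then α ℓ else 0) := by
      intro u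
      have h2 : (if (f (u-1)).1 = (f u).1 then 0 else α (f u).1)
          = (if (f (u-1)).1 ≠ (f u).1 then α (f u).1 else 0) := by
        by_cases h : (f (u-1)).1 = (f u).1 <;> simp [h]
      rw [h2, single_line_sum u α ((f (u-1)).1 ≠ (f u).1)]
      apply Finset.sum_congr rfl
      intro ℓ _
      by_cases hL : (f u).1 = ℓ
      · subst hL; rfl
      · simp [hL]
    rw [Finset.sum_congr rfl (fun u _ => h1 u), Finset.sum_comm]
    apply Finset.sum_congr rfl
    intro ℓ _
    rw [← Finset.sum_filter, Finset.sum_const, nsmul_eq_mul, mul_comm]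
    congr 2
    -- card of shifted enters = card of exits
    calc (univ.filter (fun u : ZMod n => (f u).1 = ℓ ∧ (f (u-1)).1 ≠ ℓ)).card
        = (univ.filter (fun t : ZMod n => ¬ (f t).1 = ℓ ∧ (f (t+1)).1 = ℓ)).card := by
          apply Finset.card_bij (fun u _ => u - 1)
          · intro a ha
            simp only [Finset.mem_filter, Finset.mem_univ, true_and] at ha ⊢
            rw [sub_add_cancel]
            exact ⟨ha.2, ha.1⟩
          · intro a _ b _ h
            have := congrArg (fun x => x + 1) h
            simpa using this
          · intro b hb
            refine ⟨b + 1, ?_, by ring⟩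
            simp only [Finset.mem_filter, Finset.mem_univ, true_and] at hb ⊢
            rw [add_sub_cancel_right]
            exact ⟨hb.2, hb.1⟩
      _ = (univ.filter (fun t : ZMod n => (f t).1 = ℓ ∧ ¬ (f (t+1)).1 = ℓ)).card :=
          (card_flip_eq (fun t => (f t).1 = ℓ)).symm
      _ = (Exits f ℓ).card := rfl
  rw [hA, hB]; ring

/-- The main abstract lower bound. -/
theorem core_bound
    (hα : ∀ ℓ, 0 < α ℓ)
    (hNα : ∀ ℓ, (N ℓ : ℝ) * α ℓ = 1)
    (hsurj : ∀ ℓ : Fin 3, ∀ s : ℕ, s ≤ N ℓ → ∃ t, f t = (ℓ, (s : ℝ) * α ℓ))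
    (hval : ∀ t : ZMod n, ∃ s : ℕ, s ≤ N ((f t).1) ∧ (f t).2 = (s:ℝ) * α ((f t).1)) :
    4 + 2 * (α 0 + α 1 + α 2)
      ≤ ∑ t : ZMod n, (|(f (t+1)).2 - (f t).2|
          + (if (f t).1 = (f (t+1)).1 then 0 else α (f t).1 + α (f (t+1)).1)) := by
  classical
  -- basic facts
  have h1G : (1:ℝ) ∈ G f := by
    obtain ⟨t, ht⟩ := hsurj 0 (N 0) le_rfl
    refine Finset.mem_image.mpr ⟨t, Finset.mem_univ _, ?_⟩
    rw [ht]; exact hNα 0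
  have h0G : (0:ℝ) ∈ G f := by
    obtain ⟨t, ht⟩ := hsurj 0 0 (Nat.zero_le _)
    refine Finset.mem_image.mpr ⟨t, Finset.mem_univ _, ?_⟩
    rw [ht]; simp
  have hGle : ∀ v ∈ G f, v ≤ 1 := by
    intro v hv
    obtain ⟨t, -, rfl⟩ := Finset.mem_image.mp hv
    obtain ⟨s, hs, hz⟩ := hval t
    rw [hz, ← hNα ((f t).1)]
    exact mul_le_mul_of_nonneg_right (by exact_mod_cast hs) (le_of_lt (hα _))
  have hG0 : ∀ v ∈ G f, 0 ≤ v := by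
    intro v hv
    obtain ⟨t, -, rfl⟩ := Finset.mem_image.mp hv
    obtain ⟨s, -, hz⟩ := hval t
    rw [hz]
    exact mul_nonneg (Nat.cast_nonneg s) (le_of_lt (hα _))
  have hother : ∀ t : ZMod n, ∃ u : ZMod n, (f u).1 ≠ (f t).1 := by
    obtain ⟨t0, ht0⟩ := hsurj 0 0 (Nat.zero_le _)
    obtain ⟨t1, ht1⟩ := hsurj 1 0 (Nat.zero_le _)
    have l0 : (f t0).1 = 0 := by rw [ht0]
    have l1 : (f t1).1 = 1 := by rw [ht1]
    intro t
    by_cases h : (f t).1 = 0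
    · refine ⟨t1, ?_⟩
      rw [l1, h]
      decide
    · exact ⟨t0, by rw [l0]; exact fun hc => h hc.symm⟩
  have hlen_nonneg : ∀ v ∈ Gaps f, 0 ≤ len f v := by
    intro v hv
    rw [Gaps, Finset.mem_filter] at hv
    have := (nxt_spec h1G hv.2).1
    rw [len]; linarith
  -- total gap length is 1
  have htot : ∑ v ∈ Gaps f, len f v = 1 := by
    have := tele' h1G hGle h0G h1G (by norm_num)
    have hfe : (Gaps f).filter (fun v => (0:ℝ) ≤ v ∧ v < 1) = Gaps f := by
      apply Finset.filter_true_of_mem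
      intro v hv
      rw [Gaps, Finset.mem_filter] at hv
      exact ⟨hG0 v hv.1, hv.2⟩
    rw [hfe] at this
    linarith
  -- coverage for each line
  set CM : Fin 3 → ℝ := fun ℓ => ∑ v ∈ (Gaps f).filter (fun v => spans f ℓ v (nxt f v)), len f v
    with hCM
  have hcov : ∀ ℓ : Fin 3, 1 + α ℓ - ((Exits f ℓ).card : ℝ) * α ℓ ≤ CM ℓ :=
    fun ℓ => coverage hα hNα hsurj hother h1G hGle ℓ
  -- z-sum lower bound
  have hzsum : ∑ t : ZMod n, |(f (t+1)).2 - (f t).2|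
      ≥ 2 * (∑ ℓ : Fin 3, CM ℓ) - 2 := by
    rw [sumZ h1G hGle]
    have hstep : ∀ v ∈ Gaps f,
        len f v * (2 * (((univ.filter (fun ℓ : Fin 3 => spans f ℓ v (nxt f v))).card : ℝ)) - 2)
          ≤ len f v * ((Str f v).card : ℝ) := by
      intro v hv
      apply mul_le_mul_of_nonneg_left _ (hlen_nonneg v hv)
      have hv1 : v < 1 := (Finset.mem_filter.mp hv).2
      have := gap_ineq h1G (f := f) hv1
      push_cast
      have hcast := (Nat.cast_le (α := ℝ)).mpr this
      push_cast at hcast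
      linarith
    have hsum_ge := Finset.sum_le_sum hstep
    have hexpand : ∑ v ∈ Gaps f,
        len f v * (2 * (((univ.filter (fun ℓ : Fin 3 => spans f ℓ v (nxt f v))).card : ℝ)) - 2)
        = 2 * (∑ ℓ : Fin 3, CM ℓ) - 2 := by
      have hcards : ∀ v : ℝ, (((univ.filter (fun ℓ : Fin 3 => spans f ℓ v (nxt f v))).card : ℝ))
          = ∑ ℓ : Fin 3, (if spans f ℓ v (nxt f v) then (1:ℝ) else 0) := by
        intro v
        rw [Finset.sum_boole]
      calc ∑ v ∈ Gaps f, len f v * (2 * (((univ.filter (fun ℓ : Fin 3 => spans f ℓ v (nxt f v))).card : ℝ)) - 2)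
          = ∑ v ∈ Gaps f, (2 * (len f v * ∑ ℓ : Fin 3, (if spans f ℓ v (nxt f v) then (1:ℝ) else 0)) - 2 * len f v) := by
            apply Finset.sum_congr rfl
            intro v _
            rw [hcards v]; ring
        _ = 2 * (∑ v ∈ Gaps f, len f v * ∑ ℓ : Fin 3, (if spans f ℓ v (nxt f v) then (1:ℝ) else 0)) - 2 * ∑ v ∈ Gaps f, len f v := by
            rw [Finset.sum_sub_distrib, ← Finset.mul_sum, ← Finset.mul_sum]
        _ = 2 * (∑ ℓ : Fin 3, CM ℓ) - 2 := by
            rw [htot, mul_one]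
            congr 2
            calc ∑ v ∈ Gaps f, len f v * ∑ ℓ : Fin 3, (if spans f ℓ v (nxt f v) then (1:ℝ) else 0)
                = ∑ v ∈ Gaps f, ∑ ℓ : Fin 3, (if spans f ℓ v (nxt f v) then len f v else 0) := by
                  apply Finset.sum_congr rfl
                  intro v _
                  rw [Finset.mul_sum]
                  apply Finset.sum_congr rfl
                  intro ℓ _
                  by_cases h : spans f ℓ v (nxt f v) <;> simp [h]
              _ = ∑ ℓ : Fin 3, ∑ v ∈ Gaps f, (if spans f ℓ v (nxt f v) then len f v else 0) :=
                  Finset.sum_comm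
              _ = ∑ ℓ : Fin 3, CM ℓ := by
                  apply Finset.sum_congr rfl
                  intro ℓ _
                  rw [hCM]
                  simp only
                  rw [Finset.sum_filter]
    rw [ge_iff_le, ← hexpand]
    exact hsum_ge
  have hbr := bridge_sum (n := n) (f := f) (α := α)
  rw [Finset.sum_add_distrib, hbr]
  have h1 : ∑ ℓ : Fin 3, (1 + α ℓ - ((Exits f ℓ).card : ℝ) * α ℓ) ≤ ∑ ℓ : Fin 3, CM ℓ :=
    Finset.sum_le_sum (fun ℓ _ => hcov ℓ)
  have h2 : ∑ ℓ : Fin 3, (1 + α ℓ - ((Exits f ℓ).card : ℝ) * α ℓ)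
      = 3 + (α 0 + α 1 + α 2)
        - (α 0 * ((Exits f 0).card : ℝ) + α 1 * ((Exits f 1).card : ℝ)
            + α 2 * ((Exits f 2).card : ℝ)) := by
    rw [Fin.sum_univ_three]; ring
  have h3 : ∑ ℓ : Fin 3, α ℓ * ((Exits f ℓ).card : ℝ)
      = α 0 * ((Exits f 0).card : ℝ) + α 1 * ((Exits f 1).card : ℝ)
        + α 2 * ((Exits f 2).card : ℝ) :=
    Fin.sum_univ_three _
  rw [h3]
  rw [h2] at h1
  linarith [hzsum]

end Main

section Instance

noncomputable def lineOf (p : ℝ × ℝ × ℝ) : Fin 3 :=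
  if p.1 = 0 then 0 else if p.2.1 = 0 then 1 else 2

noncomputable def αv (i j k : ℕ) : Fin 3 → ℝ :=
  ![1/((i:ℝ)+1), 1/((j:ℝ)+1), 1/((k:ℝ)+1)]

def Nv (i j k : ℕ) : Fin 3 → ℕ := ![i+1, j+1, k+1]

lemma lineOf_ptX (i s : ℕ) : lineOf (ptX i s) = 0 := if_pos rfl

lemma lineOf_ptY (i j s : ℕ) : lineOf (ptY i j s) = 1 := by
  have h1 : (ptY i j s).1 = 1/((i:ℝ)+1) + 1/((j:ℝ)+1) := rfl
  rw [lineOf, h1, if_neg (by positivity)]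
  exact if_pos rfl

lemma lineOf_ptZ (i k s : ℕ) : lineOf (ptZ i k s) = 2 := by
  have h1 : (ptZ i k s).1 = 1/((i:ℝ)+1) := rfl
  have h2 : (ptZ i k s).2.1 = 1/((k:ℝ)+1) := rfl
  rw [lineOf, h1, h2, if_neg (by positivity), if_neg (by positivity)]

lemma mem_I3pts_iff {i j k : ℕ} {p : ℝ × ℝ × ℝ} :
    p ∈ I3pts i j k ↔ (∃ s, s ≤ i+1 ∧ p = ptX i s) ∨ (∃ s, s ≤ j+1 ∧ p = ptY i j s)
      ∨ (∃ s, s ≤ k+1 ∧ p = ptZ i k s) := by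
  simp only [I3pts, Finset.mem_union, Finset.mem_image, Finset.mem_range]
  constructor
  · rintro ((⟨s, hs, rfl⟩ | ⟨s, hs, rfl⟩) | ⟨s, hs, rfl⟩)
    · exact Or.inl ⟨s, by omega, rfl⟩
    · exact Or.inr (Or.inl ⟨s, by omega, rfl⟩)
    · exact Or.inr (Or.inr ⟨s, by omega, rfl⟩)
  · rintro (⟨s, hs, rfl⟩ | ⟨s, hs, rfl⟩ | ⟨s, hs, rfl⟩)
    · exact Or.inl (Or.inl ⟨s, by omega, rfl⟩)
    · exact Or.inl (Or.inr ⟨s, by omega, rfl⟩)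
    · exact Or.inr ⟨s, by omega, rfl⟩

lemma pointwise_D (i j k : ℕ) {p q : ℝ × ℝ × ℝ}
    (hp : p ∈ I3pts i j k) (hq : q ∈ I3pts i j k) :
    |q.2.2 - p.2.2| + (if lineOf p = lineOf q then 0
      else αv i j k (lineOf p) + αv i j k (lineOf q)) ≤ dist1 p q := by
  have ha : (0:ℝ) < 1/((i:ℝ)+1) := by positivity
  have hb : (0:ℝ) < 1/((j:ℝ)+1) := by positivity
  have hc : (0:ℝ) < 1/((k:ℝ)+1) := by positivity
  have habs : |q.2.2 - p.2.2| = |p.2.2 - q.2.2| := abs_sub_comm _ _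
  rw [dist1, habs]
  have hsuff : (if lineOf p = lineOf q then (0:ℝ)
      else αv i j k (lineOf p) + αv i j k (lineOf q)) ≤ |p.1 - q.1| + |p.2.1 - q.2.1| → 
      |p.2.2 - q.2.2| + (if lineOf p = lineOf q then (0:ℝ)
      else αv i j k (lineOf p) + αv i j k (lineOf q)) ≤ |p.1 - q.1| + |p.2.1 - q.2.1| + |p.2.2 - q.2.2| := by
    intro h; linarith
  apply hsuff
  have hα0 : αv i j k 0 = 1/((i:ℝ)+1) := rfl
  have hα1 : αv i j k 1 = 1/((j:ℝ)+1) := rfl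
  have hα2 : αv i j k 2 = 1/((k:ℝ)+1) := rfl
  rcases mem_I3pts_iff.mp hp with ⟨s, hs, rfl⟩ | ⟨s, hs, rfl⟩ | ⟨s, hs, rfl⟩ <;>
    rcases mem_I3pts_iff.mp hq with ⟨s', hs', rfl⟩ | ⟨s', hs', rfl⟩ | ⟨s', hs', rfl⟩
  · rw [lineOf_ptX, lineOf_ptX, if_pos rfl]
    exact add_nonneg (abs_nonneg _) (abs_nonneg _)
  · rw [lineOf_ptX, lineOf_ptY, if_neg (by decide), hα0, hα1]
    show _ ≤ |(ptX i s).1 - (ptY i j s').1| + |(ptX i s).2.1 - (ptY i j s').2.1|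
    simp only [ptX, ptY]
    rw [zero_sub, abs_neg, abs_of_nonneg (by positivity), sub_self, abs_zero, add_zero]
  · rw [lineOf_ptX, lineOf_ptZ, if_neg (by decide), hα0, hα2]
    show _ ≤ |(ptX i s).1 - (ptZ i k s').1| + |(ptX i s).2.1 - (ptZ i k s').2.1|
    simp only [ptX, ptZ]
    rw [zero_sub, abs_neg, abs_of_nonneg (by positivity), zero_sub, abs_neg,
      abs_of_nonneg (by positivity)]
  · rw [lineOf_ptY, lineOf_ptX, if_neg (by decide), hα1, hα0]
    show _ ≤ |(ptY i j s).1 - (ptX i s').1| + |(ptY i j s).2.1 - (ptX i s').2.1|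
    simp only [ptX, ptY]
    rw [sub_zero, abs_of_nonneg (by positivity), sub_self, abs_zero, add_zero]
    linarith
  · rw [lineOf_ptY, lineOf_ptY, if_pos rfl]
    exact add_nonneg (abs_nonneg _) (abs_nonneg _)
  · rw [lineOf_ptY, lineOf_ptZ, if_neg (by decide), hα1, hα2]
    show _ ≤ |(ptY i j s).1 - (ptZ i k s').1| + |(ptY i j s).2.1 - (ptZ i k s').2.1|
    simp only [ptY, ptZ]
    rw [add_sub_cancel_left, abs_of_nonneg (by positivity), zero_sub, abs_neg,
      abs_of_nonneg (by positivity)]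
  · rw [lineOf_ptZ, lineOf_ptX, if_neg (by decide), hα2, hα0]
    show _ ≤ |(ptZ i k s).1 - (ptX i s').1| + |(ptZ i k s).2.1 - (ptX i s').2.1|
    simp only [ptX, ptZ]
    rw [sub_zero, abs_of_nonneg (by positivity), sub_zero, abs_of_nonneg (by positivity)]
    linarith
  · rw [lineOf_ptZ, lineOf_ptY, if_neg (by decide), hα2, hα1]
    show _ ≤ |(ptZ i k s).1 - (ptY i j s').1| + |(ptZ i k s).2.1 - (ptY i j s').2.1|
    simp only [ptY, ptZ]
    rw [show 1/((i:ℝ)+1) - (1/((i:ℝ)+1) + 1/((j:ℝ)+1)) = -(1/((j:ℝ)+1)) by ring, abs_neg,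
      abs_of_nonneg (by positivity), sub_zero, abs_of_nonneg (by positivity)]
    linarith
  · rw [lineOf_ptZ, lineOf_ptZ, if_pos rfl]
    exact add_nonneg (abs_nonneg _) (abs_nonneg _)

lemma cycleLength_eq {β : Type*} (d : β → β → ℝ) (L : List β) [NeZero L.length] :
    cycleLength d L = ∑ t : ZMod L.length,
      d (L.get ⟨t.val, ZMod.val_lt t⟩) (L.get ⟨(t+1).val, ZMod.val_lt _⟩) := by
  have hpos : 0 < L.length := Nat.pos_of_ne_zero (NeZero.ne _)
  have hzip : L.zip (L.rotate 1) = List.ofFn (fun x : Fin L.length =>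
      (L.get x, L.get ⟨((x : ℕ) + 1) % L.length, Nat.mod_lt _ hpos⟩)) := by
    apply List.ext_getElem
    · simp [List.length_zip, List.length_rotate, List.length_ofFn]
    · intro m h1 h2
      have hm : m < L.length := by
        simpa [List.length_zip, List.length_rotate] using h1
      rw [List.getElem_ofFn, List.getElem_zip, List.getElem_rotate]
      simp [List.get_eq_getElem]
  rw [cycleLength, hzip, List.map_ofFn, List.sum_ofFn]
  apply Fintype.sum_equiv
    ⟨fun x : Fin L.length => ((x : ℕ) : ZMod L.length),
     fun t => ⟨t.val, ZMod.val_lt t⟩,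
     fun x => by ext; simp [ZMod.val_cast_of_lt x.isLt],
     fun t => by simp [ZMod.natCast_rightInverse t]⟩
  intro x
  simp only [Function.comp, Equiv.coe_fn_mk]
  congr 1
  · congr 1
    ext
    simp [ZMod.val_cast_of_lt x.isLt]
  · congr 1
    ext
    simp only []
    have h1 : (((x : ℕ) : ZMod L.length) + 1).val = ((x : ℕ) + 1) % L.length := by
      have : (((x : ℕ) : ZMod L.length) + 1) = (((x : ℕ) + 1 : ℕ) : ZMod L.length) := by
        push_cast; ring
      rw [this, ZMod.val_natCast]
    rw [h1]

end Instance

section Glue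

/-- Any Hamiltonian cycle on `I3pts` has length at least `4 + 2a + 2b + 2c`. -/
theorem main_bound (i j k : ℕ) (L : List (ℝ × ℝ × ℝ)) (hLf : L.toFinset = I3pts i j k) :
    4 + 2/((i:ℝ)+1) + 2/((j:ℝ)+1) + 2/((k:ℝ)+1) ≤ cycleLength dist1 L := by
  classical
  have hmem0 : ptX i 0 ∈ L := List.mem_toFinset.mp
    (by rw [hLf]; exact mem_I3pts_iff.mpr (Or.inl ⟨0, by omega, rfl⟩))
  have hn : L.length ≠ 0 := by
    intro h
    rw [List.length_eq_zero_iff] at h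
    rw [h] at hmem0
    simp at hmem0
  haveI : NeZero L.length := ⟨hn⟩
  set n := L.length with hnn
  set g : ZMod n → ℝ × ℝ × ℝ := fun t => L.get ⟨t.val, ZMod.val_lt t⟩ with hg
  have hmemL : ∀ t : ZMod n, g t ∈ I3pts i j k := by
    intro t
    rw [← hLf]
    exact List.mem_toFinset.mpr (L.get_mem _)
  set f : ZMod n → Fin 3 × ℝ := fun t => (lineOf (g t), (g t).2.2) with hf
  have hgetpt : ∀ p ∈ I3pts i j k, ∃ t : ZMod n, g t = p := by
    intro p hp
    have hpL : p ∈ L := List.mem_toFinset.mp (by rw [hLf]; exact hp)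
    obtain ⟨m, hm⟩ := List.mem_iff_get.mp hpL
    refine ⟨((m : ℕ) : ZMod n), ?_⟩
    rw [hg, ← hm]
    change L.get _ = L.get m
    congr 1
    apply Fin.ext
    exact ZMod.val_cast_of_lt m.isLt
  have hαv : ∀ ℓ : Fin 3, 0 < αv i j k ℓ := by
    intro ℓ
    fin_cases ℓ
    · show (0:ℝ) < 1/((i:ℝ)+1); positivity
    · show (0:ℝ) < 1/((j:ℝ)+1); positivity
    · show (0:ℝ) < 1/((k:ℝ)+1); positivity
  have hNαv : ∀ ℓ : Fin 3, ((Nv i j k ℓ : ℕ) : ℝ) * αv i j k ℓ = 1 := by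
    intro ℓ
    fin_cases ℓ
    · show ((i+1:ℕ):ℝ) * (1/((i:ℝ)+1)) = 1
      push_cast
      field_simp
    · show ((j+1:ℕ):ℝ) * (1/((j:ℝ)+1)) = 1
      push_cast
      field_simp
    · show ((k+1:ℕ):ℝ) * (1/((k:ℝ)+1)) = 1
      push_cast
      field_simp
  have hsurj : ∀ ℓ : Fin 3, ∀ s : ℕ, s ≤ Nv i j k ℓ → ∃ t, f t = (ℓ, (s:ℝ) * αv i j k ℓ) := by
    intro ℓ s hs
    fin_cases ℓ
    · obtain ⟨t, ht⟩ := hgetpt (ptX i s) (mem_I3pts_iff.mpr (Or.inl ⟨s, hs, rfl⟩))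
      refine ⟨t, ?_⟩
      rw [hf]
      simp only
      rw [ht, lineOf_ptX]
      have hz : (ptX i s).2.2 = (s:ℝ) * αv i j k 0 := by
        show (s:ℝ)/((i:ℝ)+1) = (s:ℝ) * (1/((i:ℝ)+1))
        rw [mul_one_div]
      rw [hz]
      rfl
    · obtain ⟨t, ht⟩ := hgetpt (ptY i j s) (mem_I3pts_iff.mpr (Or.inr (Or.inl ⟨s, hs, rfl⟩)))
      refine ⟨t, ?_⟩
      rw [hf]
      simp only
      rw [ht, lineOf_ptY]
      have hz : (ptY i j s).2.2 = (s:ℝ) * αv i j k 1 := by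
        show (s:ℝ)/((j:ℝ)+1) = (s:ℝ) * (1/((j:ℝ)+1))
        rw [mul_one_div]
      rw [hz]
      rfl
    · obtain ⟨t, ht⟩ := hgetpt (ptZ i k s) (mem_I3pts_iff.mpr (Or.inr (Or.inr ⟨s, hs, rfl⟩)))
      refine ⟨t, ?_⟩
      rw [hf]
      simp only
      rw [ht, lineOf_ptZ]
      have hz : (ptZ i k s).2.2 = (s:ℝ) * αv i j k 2 := by
        show (s:ℝ)/((k:ℝ)+1) = (s:ℝ) * (1/((k:ℝ)+1))
        rw [mul_one_div]
      rw [hz]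
      rfl
  have hval : ∀ t : ZMod n, ∃ s : ℕ, s ≤ Nv i j k ((f t).1)
      ∧ (f t).2 = (s:ℝ) * αv i j k ((f t).1) := by
    intro t
    rcases mem_I3pts_iff.mp (hmemL t) with ⟨s, hs, hp⟩ | ⟨s, hs, hp⟩ | ⟨s, hs, hp⟩
    · have hft1 : (f t).1 = 0 := by rw [hf]; simp only; rw [hp, lineOf_ptX]
      refine ⟨s, ?_, ?_⟩
      · rw [hft1]; exact hs
      · rw [hft1]
        show (g t).2.2 = (s:ℝ) * αv i j k 0
        rw [hp]
        show (s:ℝ)/((i:ℝ)+1) = (s:ℝ) * (1/((i:ℝ)+1))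
        rw [mul_one_div]
    · have hft1 : (f t).1 = 1 := by rw [hf]; simp only; rw [hp, lineOf_ptY]
      refine ⟨s, ?_, ?_⟩
      · rw [hft1]; exact hs
      · rw [hft1]
        show (g t).2.2 = (s:ℝ) * αv i j k 1
        rw [hp]
        show (s:ℝ)/((j:ℝ)+1) = (s:ℝ) * (1/((j:ℝ)+1))
        rw [mul_one_div]
    · have hft1 : (f t).1 = 2 := by rw [hf]; simp only; rw [hp, lineOf_ptZ]
      refine ⟨s, ?_, ?_⟩
      · rw [hft1]; exact hs
      · rw [hft1]
        show (g t).2.2 = (s:ℝ) * αv i j k 2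
        rw [hp]
        show (s:ℝ)/((k:ℝ)+1) = (s:ℝ) * (1/((k:ℝ)+1))
        rw [mul_one_div]
  have hcore := core_bound (f := f) (α := αv i j k) (N := Nv i j k) hαv hNαv hsurj hval
  have hstep : ∀ t : ZMod n, (|(f (t+1)).2 - (f t).2|
      + (if (f t).1 = (f (t+1)).1 then 0 else αv i j k (f t).1 + αv i j k (f (t+1)).1))
      ≤ dist1 (g t) (g (t+1)) :=
    fun t => pointwise_D i j k (hmemL t) (hmemL (t+1))
  have hsum : ∑ t : ZMod n, (|(f (t+1)).2 - (f t).2|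
      + (if (f t).1 = (f (t+1)).1 then 0 else αv i j k (f t).1 + αv i j k (f (t+1)).1))
      ≤ ∑ t : ZMod n, dist1 (g t) (g (t+1)) :=
    Finset.sum_le_sum (fun t _ => hstep t)
  have hcyc : cycleLength dist1 L = ∑ t : ZMod n, dist1 (g t) (g (t+1)) :=
    cycleLength_eq dist1 L
  have e0 : αv i j k 0 = 1/((i:ℝ)+1) := rfl
  have e1 : αv i j k 1 = 1/((j:ℝ)+1) := rfl
  have e2 : αv i j k 2 = 1/((k:ℝ)+1) := rfl
  have d0 : (2:ℝ)/((i:ℝ)+1) = 2 * (1/((i:ℝ)+1)) := by ring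
  have d1 : (2:ℝ)/((j:ℝ)+1) = 2 * (1/((j:ℝ)+1)) := by ring
  have d2 : (2:ℝ)/((k:ℝ)+1) = 2 * (1/((k:ℝ)+1)) := by ring
  rw [hcyc]
  rw [e0, e1, e2] at hcore
  linarith [hcore, hsum]

end Glue

section FracCost

lemma frac_eq (i j k : ℕ) :
    I3fracCost i j k = 3 + 2/((i:ℝ)+1) + 2/((j:ℝ)+1) + 2/((k:ℝ)+1) := by
  have hi : ((i:ℝ)+1) ≠ 0 := by positivity
  have hj : ((j:ℝ)+1) ≠ 0 := by positivity
  have hk : ((k:ℝ)+1) ≠ 0 := by positivity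
  have hX : ∑ s ∈ Finset.range (i+1), dist1 (ptX i s) (ptX i (s+1)) = 1 := by
    have hterm : ∀ s ∈ Finset.range (i+1), dist1 (ptX i s) (ptX i (s+1)) = 1/((i:ℝ)+1) := by
      intro s _
      show |(0:ℝ) - 0| + |(0:ℝ) - 0| + |(s:ℝ)/((i:ℝ)+1) - ((s+1:ℕ):ℝ)/((i:ℝ)+1)| = _
      rw [sub_self, abs_zero]
      push_cast
      rw [div_sub_div_same, show (s:ℝ) - ((s:ℝ)+1) = -1 by ring, neg_div, abs_neg,
        abs_of_nonneg (by positivity)]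
      ring
    rw [Finset.sum_congr rfl hterm, Finset.sum_const, Finset.card_range, nsmul_eq_mul]
    push_cast
    field_simp
  have hY : ∑ s ∈ Finset.range (j+1), dist1 (ptY i j s) (ptY i j (s+1)) = 1 := by
    have hterm : ∀ s ∈ Finset.range (j+1), dist1 (ptY i j s) (ptY i j (s+1)) = 1/((j:ℝ)+1) := by
      intro s _
      show |(1/((i:ℝ)+1) + 1/((j:ℝ)+1)) - (1/((i:ℝ)+1) + 1/((j:ℝ)+1))| + |(0:ℝ) - 0|
        + |(s:ℝ)/((j:ℝ)+1) - ((s+1:ℕ):ℝ)/((j:ℝ)+1)| = _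
      rw [sub_self, sub_self, abs_zero]
      push_cast
      rw [div_sub_div_same, show (s:ℝ) - ((s:ℝ)+1) = -1 by ring, neg_div, abs_neg,
        abs_of_nonneg (by positivity)]
      ring
    rw [Finset.sum_congr rfl hterm, Finset.sum_const, Finset.card_range, nsmul_eq_mul]
    push_cast
    field_simp
  have hZ : ∑ s ∈ Finset.range (k+1), dist1 (ptZ i k s) (ptZ i k (s+1)) = 1 := by
    have hterm : ∀ s ∈ Finset.range (k+1), dist1 (ptZ i k s) (ptZ i k (s+1)) = 1/((k:ℝ)+1) := by
      intro s _
      show |(1/((i:ℝ)+1)) - (1/((i:ℝ)+1))| + |(1/((k:ℝ)+1)) - (1/((k:ℝ)+1))|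
        + |(s:ℝ)/((k:ℝ)+1) - ((s+1:ℕ):ℝ)/((k:ℝ)+1)| = _
      rw [sub_self, sub_self, abs_zero]
      push_cast
      rw [div_sub_div_same, show (s:ℝ) - ((s:ℝ)+1) = -1 by ring, neg_div, abs_neg,
        abs_of_nonneg (by positivity)]
      ring
    rw [Finset.sum_congr rfl hterm, Finset.sum_const, Finset.card_range, nsmul_eq_mul]
    push_cast
    field_simp
  have hXY0 : dist1 (ptX i 0) (ptY i j 0) = 1/((i:ℝ)+1) + 1/((j:ℝ)+1) := by
    show |(0:ℝ) - (1/((i:ℝ)+1) + 1/((j:ℝ)+1))| + |(0:ℝ) - 0|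
      + |((0:ℕ):ℝ)/((i:ℝ)+1) - ((0:ℕ):ℝ)/((j:ℝ)+1)| = _
    rw [zero_sub, abs_neg, abs_of_nonneg (by positivity), sub_self, abs_zero]
    norm_num
  have hXZ0 : dist1 (ptX i 0) (ptZ i k 0) = 1/((i:ℝ)+1) + 1/((k:ℝ)+1) := by
    show |(0:ℝ) - 1/((i:ℝ)+1)| + |(0:ℝ) - 1/((k:ℝ)+1)|
      + |((0:ℕ):ℝ)/((i:ℝ)+1) - ((0:ℕ):ℝ)/((k:ℝ)+1)| = _
    rw [zero_sub, abs_neg, abs_of_nonneg (by positivity), zero_sub, abs_neg,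
      abs_of_nonneg (by positivity)]
    norm_num
  have hYZ0 : dist1 (ptY i j 0) (ptZ i k 0) = 1/((j:ℝ)+1) + 1/((k:ℝ)+1) := by
    show |(1/((i:ℝ)+1) + 1/((j:ℝ)+1)) - 1/((i:ℝ)+1)| + |(0:ℝ) - 1/((k:ℝ)+1)|
      + |((0:ℕ):ℝ)/((j:ℝ)+1) - ((0:ℕ):ℝ)/((k:ℝ)+1)| = _
    rw [show (1/((i:ℝ)+1) + 1/((j:ℝ)+1)) - 1/((i:ℝ)+1) = 1/((j:ℝ)+1) by ring,
      abs_of_nonneg (by positivity), zero_sub, abs_neg, abs_of_nonneg (by positivity)]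
    norm_num
  have hzX : ((i+1:ℕ):ℝ)/((i:ℝ)+1) = 1 := by push_cast; field_simp
  have hzY : ((j+1:ℕ):ℝ)/((j:ℝ)+1) = 1 := by push_cast; field_simp
  have hzZ : ((k+1:ℕ):ℝ)/((k:ℝ)+1) = 1 := by push_cast; field_simp
  have hXY1 : dist1 (ptX i (i+1)) (ptY i j (j+1)) = 1/((i:ℝ)+1) + 1/((j:ℝ)+1) := by
    show |(0:ℝ) - (1/((i:ℝ)+1) + 1/((j:ℝ)+1))| + |(0:ℝ) - 0|
      + |((i+1:ℕ):ℝ)/((i:ℝ)+1) - ((j+1:ℕ):ℝ)/((j:ℝ)+1)| = _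
    rw [hzX, hzY, sub_self, abs_zero, zero_sub, abs_neg, abs_of_nonneg (by positivity),
      sub_self, abs_zero]
    ring
  have hXZ1 : dist1 (ptX i (i+1)) (ptZ i k (k+1)) = 1/((i:ℝ)+1) + 1/((k:ℝ)+1) := by
    show |(0:ℝ) - 1/((i:ℝ)+1)| + |(0:ℝ) - 1/((k:ℝ)+1)|
      + |((i+1:ℕ):ℝ)/((i:ℝ)+1) - ((k+1:ℕ):ℝ)/((k:ℝ)+1)| = _
    rw [hzX, hzZ, sub_self, abs_zero, zero_sub, abs_neg, abs_of_nonneg (by positivity),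
      zero_sub, abs_neg, abs_of_nonneg (by positivity)]
    ring
  have hYZ1 : dist1 (ptY i j (j+1)) (ptZ i k (k+1)) = 1/((j:ℝ)+1) + 1/((k:ℝ)+1) := by
    show |(1/((i:ℝ)+1) + 1/((j:ℝ)+1)) - 1/((i:ℝ)+1)| + |(0:ℝ) - 1/((k:ℝ)+1)|
      + |((j+1:ℕ):ℝ)/((j:ℝ)+1) - ((k+1:ℕ):ℝ)/((k:ℝ)+1)| = _
    rw [hzY, hzZ, sub_self, abs_zero,
      show (1/((i:ℝ)+1) + 1/((j:ℝ)+1)) - 1/((i:ℝ)+1) = 1/((j:ℝ)+1) by ring,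
      abs_of_nonneg (by positivity), zero_sub, abs_neg, abs_of_nonneg (by positivity)]
    ring
  rw [I3fracCost, hX, hY, hZ, hXY0, hXZ0, hYZ0, hXY1, hXZ1, hYZ1]
  ring

lemma ratio_eq (i j k : ℕ) :
    (4 + 2 / ((i : ℝ) + 1) + 2 / ((j : ℝ) + 1) + 2 / ((k : ℝ) + 1)) /
        (3 + 2 / ((i : ℝ) + 1) + 2 / ((j : ℝ) + 1) + 2 / ((k : ℝ) + 1)) =
      1 + 1 / (3 + 2 * (1 / ((i : ℝ) + 1) + 1 / ((j : ℝ) + 1) + 1 / ((k : ℝ) + 1))) := by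
  have hD : (0:ℝ) < 3 + 2 / ((i:ℝ)+1) + 2 / ((j:ℝ)+1) + 2 / ((k:ℝ)+1) := by positivity
  have hD2 : (0:ℝ) < 3 + 2 * (1 / ((i:ℝ)+1) + 1 / ((j:ℝ)+1) + 1 / ((k:ℝ)+1)) := by positivity
  rw [div_eq_iff hD.ne']
  field_simp
  ring

end FracCost

end I3proof

theorem I3_fractional_cost_and_ratio (i j k : ℕ) :
    I3fracCost i j k = 3 + 2 / ((i : ℝ) + 1) + 2 / ((j : ℝ) + 1) + 2 / ((k : ℝ) + 1) ∧
    (4 + 2 / ((i : ℝ) + 1) + 2 / ((j : ℝ) + 1) + 2 / ((k : ℝ) + 1)) /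
        (3 + 2 / ((i : ℝ) + 1) + 2 / ((j : ℝ) + 1) + 2 / ((k : ℝ) + 1)) =
      1 + 1 / (3 + 2 * (1 / ((i : ℝ) + 1) + 1 / ((j : ℝ) + 1) + 1 / ((k : ℝ) + 1))) ∧
    ∀ L : List (ℝ × ℝ × ℝ), L.Nodup → L.toFinset = I3pts i j k →
      1 + 1 / (3 + 2 * (1 / ((i : ℝ) + 1) + 1 / ((j : ℝ) + 1) + 1 / ((k : ℝ) + 1))) ≤
        cycleLength dist1 L / I3fracCost i j k := by
  refine ⟨I3proof.frac_eq i j k, I3proof.ratio_eq i j k, ?_⟩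
  intro L _ hLf
  have hb := I3proof.main_bound i j k L hLf
  have hfc := I3proof.frac_eq i j k
  have hD : (0:ℝ) < 3 + 2/((i:ℝ)+1) + 2/((j:ℝ)+1) + 2/((k:ℝ)+1) := by positivity
  rw [hfc, le_div_iff₀ hD]
  have hre : (1 + 1 / (3 + 2 * (1/((i:ℝ)+1) + 1/((j:ℝ)+1) + 1/((k:ℝ)+1))))
      * (3 + 2/((i:ℝ)+1) + 2/((j:ℝ)+1) + 2/((k:ℝ)+1))
      = 4 + 2/((i:ℝ)+1) + 2/((j:ℝ)+1) + 2/((k:ℝ)+1) := by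
    have h2 : (0:ℝ) < 3 + 2 * (1/((i:ℝ)+1) + 1/((j:ℝ)+1) + 1/((k:ℝ)+1)) := by positivity
    field_simp
    ring
  rw [hre]
  exact hb
end
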